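/- For a nilpotent Lie algebra L over a field of characteristic 0, two Maurer–Cartan elements related by a gauge transformation exp(x)·ω (with x ∈ L of degree 0 acting by the gauge action) are both solutions of the Maurer–Cartan equation; i.e. the gauge action of the group exp(L⁰) preserves the Maurer–Cartan set {ω ∈ L¹ : dω + ½[ω,ω] = 0}. -/

import Mathlib

/-!
STATEMENT 1: For a nilpotent DGLA `L` over a field of characteristic 0, the
gauge action `exp(x)·ω = ω + Σ_{n≥0} (ad_x)^n([x,ω] − dx)/(n+1)!` of
`exp(L⁰)` preserves the Maurer–Cartan set `{ω ∈ L¹ : dω + ½[ω,ω] = 0}`.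

We model the relevant (truncated) part of a differential graded Lie algebra by
its graded pieces `L0, L1, L2, L3` together with the differentials, brackets
and the graded antisymmetry/Jacobi/Leibniz axioms relating them.  Nilpotency
is expressed by the vanishing of a power of `ad_x` on `L1`.
-/

/-- The (truncated) data of a differential graded Lie algebra over `K`,
with graded pieces `L0, L1, L2, L3` in degrees `0,1,2,3`. -/
structure DGLAData (K L0 L1 L2 L3 : Type*) [Field K] [CharZero K]
    [AddCommGroup L0] [Module K L0] [AddCommGroup L1] [Module K L1]
    [AddCommGroup L2] [Module K L2] [AddCommGroup L3] [Module K L3] where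
  /-- differential in degree 0 -/
  d0 : L0 →ₗ[K] L1
  /-- differential in degree 1 -/
  d1 : L1 →ₗ[K] L2
  /-- differential in degree 2 -/
  d2 : L2 →ₗ[K] L3
  /-- bracket `[·,·] : L0 × L0 → L0` -/
  b00 : L0 →ₗ[K] L0 →ₗ[K] L0
  /-- bracket `[·,·] : L0 × L1 → L1` -/
  b01 : L0 →ₗ[K] L1 →ₗ[K] L1
  /-- bracket `[·,·] : L0 × L2 → L2` -/
  b02 : L0 →ₗ[K] L2 →ₗ[K] L2
  /-- bracket `[·,·] : L1 × L1 → L2` -/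
  b11 : L1 →ₗ[K] L1 →ₗ[K] L2
  /-- bracket `[·,·] : L1 × L2 → L3` -/
  b12 : L1 →ₗ[K] L2 →ₗ[K] L3
  /-- graded antisymmetry in degree (0,0) -/
  antisymm00 : ∀ x y, b00 x y = - b00 y x
  /-- graded antisymmetry in degree (1,1): `[ω,η] = [η,ω]` -/
  symm11 : ∀ ω η, b11 ω η = b11 η ω
  /-- `d² = 0` on `L0` -/
  d_sq0 : ∀ x, d1 (d0 x) = 0
  /-- `d² = 0` on `L1` -/
  d_sq1 : ∀ ω, d2 (d1 ω) = 0
  /-- Jacobi identity in degrees (0,0,1) -/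
  jacobi001 : ∀ x y ω, b01 x (b01 y ω) - b01 y (b01 x ω) = b01 (b00 x y) ω
  /-- Jacobi identity in degrees (0,1,1) -/
  jacobi011 : ∀ x ω η, b02 x (b11 ω η) = b11 (b01 x ω) η + b11 ω (b01 x η)
  /-- Leibniz rule for `d` on `[L0,L0]` -/
  leibniz00 : ∀ x y, d0 (b00 x y) = b01 x (d0 y) - b01 y (d0 x)
  /-- Leibniz rule for `d` on `[L0,L1]` -/
  leibniz01 : ∀ x ω, d1 (b01 x ω) = b11 (d0 x) ω + b02 x (d1 ω)

namespace DGLAData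

variable {K L0 L1 L2 L3 : Type*} [Field K] [CharZero K]
    [AddCommGroup L0] [Module K L0] [AddCommGroup L1] [Module K L1]
    [AddCommGroup L2] [Module K L2] [AddCommGroup L3] [Module K L3]

/-- Maurer–Cartan equation for `ω ∈ L¹`:  `dω + ½[ω,ω] = 0`. -/
def IsMC (D : DGLAData K L0 L1 L2 L3) (ω : L1) : Prop :=
  D.d1 ω + (2 : K)⁻¹ • D.b11 ω ω = 0

/-- The gauge transform `exp(x)·ω = ω + Σ_{n≥0} (ad_x)^n([x,ω] − dx)/(n+1)!`,
where the sum is finite since `ad_x` is nilpotent (`(ad_x)^N = 0`). -/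
def gauge (D : DGLAData K L0 L1 L2 L3) (x : L0) (ω : L1) (N : ℕ) : L1 :=
  ω + ∑ n ∈ Finset.range N,
    (((n + 1).factorial : K))⁻¹ • ((D.b01 x : Module.End K L1) ^ n) (D.b01 x ω - D.d0 x)


section GaugeProof

variable (D : DGLAData K L0 L1 L2 L3) (x : L0) (ω : L1)

/-- Coefficients of the path `t ↦ exp(tx)·ω`. -/
noncomputable def wcoef : ℕ → L1
  | 0 => ω
  | (m+1) => (((m+1).factorial : K))⁻¹ •
      ((D.b01 x : Module.End K L1) ^ m) (D.b01 x ω - D.d0 x)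

/-- Curvature coefficients of the path. -/
noncomputable def ccoef (k : ℕ) : L2 :=
  D.d1 (D.wcoef x ω k) +
    (2:K)⁻¹ • ∑ p ∈ Finset.HasAntidiagonal.antidiagonal k, D.b11 (D.wcoef x ω p.1) (D.wcoef x ω p.2)

lemma wcoef_succ_smul (m : ℕ) :
    ((m+1 : ℕ) : K) • D.wcoef x ω (m+1)
      = D.b01 x (D.wcoef x ω m) - (if m = 0 then D.d0 x else 0) := by
  cases m with
  | zero => simp [wcoef]
  | succ m =>
      have h2 : ((m:K) + 1 + 1) ≠ 0 := by
        have : ((m+2:ℕ):K) ≠ 0 := Nat.cast_ne_zero.2 (by omega)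
        push_cast at this
        intro h; exact this (by linear_combination h)
      have hfac : ((m+2 : ℕ) : K) • (((m+2).factorial : K))⁻¹
          = (((m+1).factorial : K))⁻¹ := by
        rw [smul_eq_mul, Nat.factorial_succ (m+1)]
        push_cast
        rw [mul_inv, show ((m:K) + 2) = ((m:K) + 1 + 1) by ring,
          mul_inv_cancel_left₀ h2]
      simp only [wcoef, if_neg (Nat.succ_ne_zero m), sub_zero]
      rw [smul_smul, ← smul_eq_mul, hfac, map_smul]
      congr 1
      rw [pow_succ', Module.End.mul_apply]

lemma wcoef_eq_zero {N : ℕ} (hnil : ((D.b01 x : Module.End K L1) ^ N) = 0)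
    {m : ℕ} (hm : N < m) : D.wcoef x ω m = 0 := by
  obtain ⟨m', rfl⟩ : ∃ m', m = m' + 1 := ⟨m-1, by omega⟩
  have h : (D.b01 x : Module.End K L1) ^ m' = 0 := by
    obtain ⟨j, rfl⟩ : ∃ j, m' = N + j := ⟨m' - N, by omega⟩
    rw [pow_add, hnil, zero_mul]
  simp [wcoef, h]

lemma ccoef_succ_smul (k : ℕ) :
    ((k+1 : ℕ) : K) • D.ccoef x ω (k+1) = D.b02 x (D.ccoef x ω k) := by
  classical
  simp only [ccoef]
  set W := D.wcoef x ω with hW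
  set T : L2 := ∑ p ∈ Finset.HasAntidiagonal.antidiagonal k, D.b11 (D.b01 x (W p.1)) (W p.2) with hT
  have two_ne : (2:K) ≠ 0 := two_ne_zero
  have hhalf : ∀ v : L2, (2:K)⁻¹ • (v + v) = v := fun v => by
    rw [← two_smul K v, smul_smul, inv_mul_cancel₀ two_ne, one_smul]
  have hswap : ∑ p ∈ Finset.HasAntidiagonal.antidiagonal k, D.b11 (W p.1) (D.b01 x (W p.2)) = T := by
    rw [hT, ← Finset.Nat.sum_antidiagonal_swap
      (f := fun p => D.b11 (D.b01 x (W p.1)) (W p.2))]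
    exact Finset.sum_congr rfl fun p _ => D.symm11 _ _
  have hA : ((k+1 : ℕ) : K) • D.d1 (W (k+1))
      = D.b11 (D.d0 x) (W k) + D.b02 x (D.d1 (W k)) := by
    rw [← map_smul, D.wcoef_succ_smul x ω k, map_sub, D.leibniz01]
    have h0 : D.d1 (if k = 0 then D.d0 x else 0) = 0 := by
      split
      · exact D.d_sq0 x
      · exact map_zero _
    rw [h0, sub_zero]
  have hfirst : ∑ p ∈ Finset.HasAntidiagonal.antidiagonal (k+1),
        ((p.1 : ℕ) : K) • D.b11 (W p.1) (W p.2)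
      = T - D.b11 (D.d0 x) (W k) := by
    rw [Finset.Nat.sum_antidiagonal_succ]
    simp only [Nat.cast_zero, zero_smul, zero_add]
    have hterm : ∀ p ∈ Finset.HasAntidiagonal.antidiagonal k,
        ((p.1 + 1 : ℕ) : K) • D.b11 (W (p.1 + 1)) (W p.2)
          = D.b11 (D.b01 x (W p.1)) (W p.2)
            - (if p.1 = 0 then D.b11 (D.d0 x) (W p.2) else 0) := by
      intro p _
      rw [← LinearMap.map_smul₂, D.wcoef_succ_smul x ω p.1, map_sub,
        LinearMap.sub_apply]
      congr 1
      split <;> simp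
    rw [Finset.sum_congr rfl hterm, Finset.sum_sub_distrib]
    congr 1
    rw [Finset.sum_eq_single_of_mem (0, k)
      (Finset.HasAntidiagonal.mem_antidiagonal.2 (by simp))]
    · simp
    · rintro ⟨b1, b2⟩ hb hne
      rw [if_neg]
      intro hb1
      apply hne
      have := Finset.HasAntidiagonal.mem_antidiagonal.1 hb
      simp only at hb1
      subst hb1
      simp only [zero_add] at this
      subst this
      rfl
  have hsecond : ∑ p ∈ Finset.HasAntidiagonal.antidiagonal (k+1),
        ((p.2 : ℕ) : K) • D.b11 (W p.1) (W p.2)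
      = ∑ p ∈ Finset.HasAntidiagonal.antidiagonal (k+1), ((p.1 : ℕ) : K) • D.b11 (W p.1) (W p.2) := by
    rw [← Finset.Nat.sum_antidiagonal_swap
      (f := fun p => ((p.1 : ℕ) : K) • D.b11 (W p.1) (W p.2))]
    exact Finset.sum_congr rfl fun p _ => by
      simp only [Prod.fst_swap, Prod.snd_swap]
      rw [D.symm11]
  have h1 : ((k+1 : ℕ) : K) • ∑ p ∈ Finset.HasAntidiagonal.antidiagonal (k+1), D.b11 (W p.1) (W p.2)
      = (T - D.b11 (D.d0 x) (W k)) + (T - D.b11 (D.d0 x) (W k)) := by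
    rw [Finset.smul_sum]
    have : ∀ p ∈ Finset.HasAntidiagonal.antidiagonal (k+1),
        ((k+1 : ℕ) : K) • D.b11 (W p.1) (W p.2)
          = ((p.1 : ℕ) : K) • D.b11 (W p.1) (W p.2)
            + ((p.2 : ℕ) : K) • D.b11 (W p.1) (W p.2) := by
      intro p hp
      rw [← add_smul, ← Nat.cast_add, Finset.HasAntidiagonal.mem_antidiagonal.1 hp]
    rw [Finset.sum_congr rfl this, Finset.sum_add_distrib, hfirst, hsecond, hfirst]
  have h2 : D.b02 x (∑ p ∈ Finset.HasAntidiagonal.antidiagonal k, D.b11 (W p.1) (W p.2)) = T + T := by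
    rw [map_sum]
    have : ∀ p ∈ Finset.HasAntidiagonal.antidiagonal k,
        D.b02 x (D.b11 (W p.1) (W p.2))
          = D.b11 (D.b01 x (W p.1)) (W p.2) + D.b11 (W p.1) (D.b01 x (W p.2)) :=
      fun p _ => D.jacobi011 x _ _
    rw [Finset.sum_congr rfl this, Finset.sum_add_distrib, hswap]
  rw [smul_add, map_add, hA, smul_comm, h1, map_smul, h2, hhalf, hhalf]
  abel

lemma ccoef_eq_zero (hω : D.IsMC ω) (k : ℕ) : D.ccoef x ω k = 0 := by
  induction k with
  | zero => simpa [ccoef, wcoef, DGLAData.IsMC] using hω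
  | succ k ih =>
      have h := D.ccoef_succ_smul x ω k
      rw [ih, map_zero] at h
      have hne : ((k+1:ℕ):K) ≠ 0 := Nat.cast_ne_zero.2 (Nat.succ_ne_zero k)
      exact (smul_eq_zero.1 h).resolve_left hne

end GaugeProof

/-- **Gauge invariance of the Maurer–Cartan set**: in a nilpotent DGLA over a
field of characteristic zero, if `ω` satisfies the Maurer–Cartan equation then
so does `exp(x)·ω` for every `x ∈ L⁰`. -/
theorem gauge_isMC (D : DGLAData K L0 L1 L2 L3) (x : L0) (ω : L1) (N : ℕ)
    (hnil : ((D.b01 x : Module.End K L1) ^ N) = 0)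
    (hω : D.IsMC ω) : D.IsMC (D.gauge x ω N) := by
  classical
  have hG : D.gauge x ω N = ∑ m ∈ Finset.range (N+1), D.wcoef x ω m := by
    rw [Finset.sum_range_succ']
    simp only [wcoef, gauge]
    rw [add_comm]
  rw [DGLAData.IsMC, hG]
  set W := D.wcoef x ω with hW
  have hWzero : ∀ m, N < m → W m = 0 := fun m hm => D.wcoef_eq_zero x ω hnil hm
  -- Step 1: extend the range of the differential sum
  have step1 : D.d1 (∑ m ∈ Finset.range (N+1), W m)
      = ∑ m ∈ Finset.range (2*N+1), D.d1 (W m) := by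
    rw [map_sum]
    apply Finset.sum_subset
    · exact Finset.range_subset_range.2 (by omega)
    · intro m _ hm
      rw [hWzero m (by simpa using hm), map_zero]
  -- Step 2: the bracket as a sum over the square
  have step2 : D.b11 (∑ m ∈ Finset.range (N+1), W m) (∑ m ∈ Finset.range (N+1), W m)
      = ∑ p ∈ Finset.range (N+1) ×ˢ Finset.range (N+1), D.b11 (W p.1) (W p.2) := by
    have hb : D.b11 (∑ m ∈ Finset.range (N+1), W m)
        = ∑ m ∈ Finset.range (N+1), D.b11 (W m) := map_sum _ _ _
    rw [Finset.sum_product, hb, LinearMap.sum_apply]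
    exact Finset.sum_congr rfl fun i _ => map_sum _ _ _
  -- Step 3: square sum = sum over antidiagonals
  have hdisj : (↑(Finset.range (2*N+1)) : Set ℕ).PairwiseDisjoint
      (fun k => Finset.HasAntidiagonal.antidiagonal k) := by
    intro k1 _ k2 _ hne
    refine Finset.disjoint_left.2 fun p hp1 hp2 => hne ?_
    rw [← Finset.HasAntidiagonal.mem_antidiagonal.1 hp1, ← Finset.HasAntidiagonal.mem_antidiagonal.1 hp2]
  have step3 : ∑ p ∈ Finset.range (N+1) ×ˢ Finset.range (N+1), D.b11 (W p.1) (W p.2)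
      = ∑ k ∈ Finset.range (2*N+1), ∑ p ∈ Finset.HasAntidiagonal.antidiagonal k,
          D.b11 (W p.1) (W p.2) := by
    rw [← Finset.sum_biUnion hdisj]
    apply Finset.sum_subset
    · intro p hp
      rw [Finset.mem_product, Finset.mem_range, Finset.mem_range] at hp
      exact Finset.mem_biUnion.2 ⟨p.1 + p.2, Finset.mem_range.2 (by omega),
        Finset.HasAntidiagonal.mem_antidiagonal.2 rfl⟩
    · intro p _ hp
      rw [Finset.mem_product, Finset.mem_range, Finset.mem_range] at hp
      push_neg at hp
      have : N < p.1 ∨ N < p.2 := by omega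
      rcases this with h | h
      · rw [hWzero _ h]; simp
      · rw [hWzero _ h]; simp
  -- Step 4: assemble
  have step4 : ∑ k ∈ Finset.range (2*N+1), D.ccoef x ω k
      = D.d1 (∑ m ∈ Finset.range (N+1), W m)
        + (2:K)⁻¹ • D.b11 (∑ m ∈ Finset.range (N+1), W m)
            (∑ m ∈ Finset.range (N+1), W m) := by
    rw [step1, step2, step3]
    simp only [ccoef, ← hW]
    rw [Finset.sum_add_distrib, Finset.smul_sum]
  rw [← step4]
  exact Finset.sum_eq_zero fun k _ => D.ccoef_eq_zero x ω hω k

end DGLAData
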